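/- arXiv:2508.04447 — 5 statements merged into one kernel-verified Lean document; each statement's English description precedes it below -/
import Mathlib

section
/- Let Ex, En ∈ ℝ and He ≥ 0. Let μ be the cloud model CM(Ex, En, He), i.e., the distribution of X generated by the two-layer process S ~ N(En, He²) and X | S = s ~ N(Ex, s²). Then for every z ∈ ℝ, the characteristic function of μ satisfies Φ_μ(z) = exp(i·z·Ex − En²·z² / (2·(1 + z²·He²))) / √(1 + z²·He²). -/
open MeasureTheory ProbabilityTheory Real

open scoped NNReal ENNReal

/-- The characteristic function of a measure on `ℝ`, `Φ_μ(z) = ∫ exp(i z x) dμ(x)`. -/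
noncomputable def charFunReal (μ : Measure ℝ) (z : ℝ) : ℂ :=
  ∫ x, Complex.exp (Complex.I * z * x) ∂μ

/-- The cloud model `CM(Ex, En, He)`: the mixture obtained by drawing `S ~ N(En, He²)`
and then `X | S = s ~ N(Ex, s²)`. -/
noncomputable def cloudModel (Ex En He : ℝ) : Measure ℝ :=
  (gaussianReal En ⟨He ^ 2, sq_nonneg He⟩).bind
    fun s => gaussianReal Ex ⟨s ^ 2, sq_nonneg s⟩

/-- Gaussian integral of `exp(b x² + c x)` against `N(m, v)`, for real `b` with `2 v b < 1`
and complex `c`. Also valid in the degenerate case `v = 0`. -/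
lemma integral_gaussianReal_cexp (m : ℝ) (v : ℝ≥0) (b : ℝ) (c : ℂ)
    (hb : 2 * (v : ℝ) * b < 1) :
    ∫ x : ℝ, Complex.exp ((b : ℂ) * (x : ℂ) ^ 2 + c * (x : ℂ)) ∂(gaussianReal m v)
      = (Real.sqrt (1 - 2 * (v : ℝ) * b) : ℂ)⁻¹ *
        Complex.exp (((v : ℝ) * c ^ 2 + 2 * (m : ℂ) * c + 2 * (b : ℂ) * (m : ℂ) ^ 2) /
          (2 * ((1 : ℂ) - 2 * (v : ℝ) * b))) := by
  rcases eq_or_ne v 0 with hv | hv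
  · subst hv
    rw [gaussianReal_zero_var, integral_dirac]
    simp only [NNReal.coe_zero, zero_mul, mul_zero, sub_zero, Real.sqrt_one,
      Complex.ofReal_zero, Complex.ofReal_one, inv_one, one_mul]
    congr 1
    ring
  · have hv0 : (0 : ℝ) < (v : ℝ) := lt_of_le_of_ne v.coe_nonneg (by exact_mod_cast hv.symm)
    have hD : (0 : ℝ) < 1 - 2 * (v : ℝ) * b := by linarith
    have hvC : ((v : ℝ) : ℂ) ≠ 0 := by exact_mod_cast hv0.ne'
    have hDC : ((1 : ℂ) - 2 * ((v : ℝ) : ℂ) * (b : ℂ)) ≠ 0 := by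
      have h1 : (((1 - 2 * (v : ℝ) * b : ℝ)) : ℂ) ≠ 0 := by exact_mod_cast hD.ne'
      push_cast at h1; convert h1 using 1
    rw [gaussianReal_of_var_ne_zero m hv]
    have hpdf : gaussianPDF m v = fun x => ((gaussianPDFReal m v x).toNNReal : ℝ≥0∞) := rfl
    rw [hpdf,
      integral_withDensity_eq_integral_smul (measurable_gaussianPDFReal m v).real_toNNReal]
    set B : ℂ := ((b - 1 / (2 * (v : ℝ)) : ℝ) : ℂ) with hBdef
    set C : ℂ := c + (m : ℂ) / (v : ℝ) with hCdef
    set Dd : ℂ := -(m : ℂ) ^ 2 / (2 * (v : ℝ)) with hDdef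
    have hB : B.re < 0 := by
      rw [hBdef, Complex.ofReal_re]
      have h5 : b < 1 / (2 * (v : ℝ)) := by
        rw [lt_div_iff₀ (by positivity)]; linarith
      linarith
    have hint : ∀ x : ℝ,
        ((gaussianPDFReal m v x).toNNReal : ℝ≥0) •
            Complex.exp ((b : ℂ) * (x : ℂ) ^ 2 + c * (x : ℂ))
          = ((Real.sqrt (2 * π * v))⁻¹ : ℂ) * Complex.exp (B * x ^ 2 + C * x + Dd) := by
      intro x
      rw [NNReal.smul_def, Real.coe_toNNReal _ (gaussianPDFReal_nonneg m v x),
        Complex.real_smul, gaussianPDFReal]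
      push_cast
      rw [mul_assoc, ← Complex.exp_add]
      congr 2
      rw [hBdef, hCdef, hDdef]
      push_cast
      field_simp
      ring
    simp_rw [hint, integral_const_mul, integral_cexp_quadratic hB C Dd]
    have hexp : Dd - C ^ 2 / (4 * B) =
        ((v : ℝ) * c ^ 2 + 2 * (m : ℂ) * c + 2 * (b : ℂ) * (m : ℂ) ^ 2) /
          (2 * ((1 : ℂ) - 2 * (v : ℝ) * b)) := by
      have hBne : B ≠ 0 := fun h => by simp [h] at hB
      have hDC2 : (2 * ((v : ℝ) : ℂ) * (b : ℂ) - 1) ≠ 0 := by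
        intro h; exact hDC (by linear_combination -h)
      rw [hBdef, hCdef, hDdef] at *
      push_cast at *
      have hBalt : ((b : ℂ) - 1 / (2 * ((v : ℝ) : ℂ)))
          = (2 * ((v : ℝ) : ℂ) * b - 1) / (2 * ((v : ℝ) : ℂ)) := by
        field_simp
      rw [hBalt]
      field_simp [hDC2]
      ring
    rw [hexp]
    have hpre : (↑π / -B) ^ (1 / 2 : ℂ)
        = ((Real.sqrt (2 * π * v) / Real.sqrt (1 - 2 * (v : ℝ) * b) : ℝ) : ℂ) := by
      have h1 : (↑π / -B) = ((π / (1 / (2 * (v : ℝ)) - b) : ℝ) : ℂ) := by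
        rw [hBdef]; push_cast; ring
      have h2 : π / (1 / (2 * (v : ℝ)) - b) = 2 * π * v / (1 - 2 * (v : ℝ) * b) := by
        field_simp
      have h3 : (0 : ℝ) ≤ 2 * π * v / (1 - 2 * (v : ℝ) * b) := by positivity
      rw [h1, h2, show (1 / 2 : ℂ) = ((1 / 2 : ℝ) : ℂ) by norm_num,
        ← Complex.ofReal_cpow h3, ← Real.sqrt_eq_rpow, Real.sqrt_div (by positivity)]
    rw [hpre, ← mul_assoc]
    congr 1
    have h4 : ((Real.sqrt (2 * π * v) : ℝ) : ℂ) ≠ 0 := by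
      exact_mod_cast (Real.sqrt_pos.mpr (by positivity)).ne'
    rw [Complex.ofReal_div, div_eq_mul_inv, ← mul_assoc, inv_mul_cancel₀ h4, one_mul]

/-- The map `s ↦ N(Ex, s²)` is a measurable family of measures. -/
lemma measurable_gaussian_kernel (Ex : ℝ) :
    Measurable (fun s : ℝ => gaussianReal Ex ⟨s ^ 2, sq_nonneg s⟩) := by
  refine Measure.measurable_of_measurable_coe _ fun t ht => ?_
  have heq : (fun s : ℝ => gaussianReal Ex ⟨s ^ 2, sq_nonneg s⟩ t)
      = fun s => if s = 0 then Measure.dirac Ex t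
          else ∫⁻ x in t, gaussianPDF Ex ⟨s ^ 2, sq_nonneg s⟩ x := by
    funext s
    by_cases hs : s = 0
    · subst hs
      rw [if_pos rfl]
      have h0 : (⟨(0 : ℝ) ^ 2, sq_nonneg 0⟩ : ℝ≥0) = 0 := by ext; norm_num
      rw [h0]; exact congrArg (fun μ : Measure ℝ => μ t) (gaussianReal_zero_var Ex)
    · rw [if_neg hs]
      have hv : (⟨s ^ 2, sq_nonneg s⟩ : ℝ≥0) ≠ 0 := by
        intro h
        apply hs
        have := congrArg NNReal.toReal h
        exact (pow_eq_zero_iff two_ne_zero).mp (this : s ^ 2 = 0)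
      rw [gaussianReal_apply Ex hv t]
  rw [heq]
  refine Measurable.ite ?_ measurable_const ?_
  · simpa [Set.setOf_eq_eq_singleton] using measurableSet_singleton (0 : ℝ)
  · apply Measurable.lintegral_prod_right (f := fun s x => gaussianPDF Ex ⟨s ^ 2, sq_nonneg s⟩ x)
    simp only [gaussianPDF, gaussianPDFReal, Function.uncurry]
    fun_prop

lemma bind_eq_map_snd (ν : Measure ℝ) [SFinite ν] (κ : Kernel ℝ ℝ) [IsSFiniteKernel κ] :
    ν.bind κ = (ν.compProd κ).map Prod.snd := by
  ext t ht
  rw [Measure.map_apply measurable_snd ht, Measure.compProd_apply (measurable_snd ht),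
    Measure.bind_apply ht κ.measurable.aemeasurable]
  rfl

lemma charFun_bind (ν : Measure ℝ) [IsProbabilityMeasure ν] (κ : Kernel ℝ ℝ)
    [IsMarkovKernel κ] (z : ℝ) :
    ∫ x, Complex.exp (Complex.I * z * x) ∂(ν.bind κ)
      = ∫ s, ∫ x, Complex.exp (Complex.I * z * x) ∂(κ s) ∂ν := by
  have hcont : Continuous fun x : ℝ => Complex.exp (Complex.I * z * x) := by fun_prop
  haveI : IsFiniteMeasure (ν.compProd κ) :=
    ⟨by rw [Measure.compProd_apply_univ]; exact measure_lt_top ν _⟩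
  have hnorm : ∀ x : ℝ, ‖Complex.exp (Complex.I * z * x)‖ = 1 := by
    intro x
    rw [Complex.norm_exp]
    simp [Complex.mul_re]
  have hInt : Integrable (fun p : ℝ × ℝ => Complex.exp (Complex.I * z * p.2)) (ν.compProd κ) := by
    refine (integrable_const (1 : ℝ)).mono'
      ((hcont.comp continuous_snd).aestronglyMeasurable) ?_
    exact ae_of_all _ fun p => le_of_eq (hnorm p.2)
  rw [bind_eq_map_snd, integral_map measurable_snd.aemeasurable
    (hcont.aestronglyMeasurable), Measure.integral_compProd hInt]

theorem cloudModel_charFun (Ex En He : ℝ) (hHe : 0 ≤ He) (z : ℝ) :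
    charFunReal (cloudModel Ex En He) z =
      Complex.exp (Complex.I * z * Ex -
          (En ^ 2 * z ^ 2 : ℝ) / (2 * (1 + z ^ 2 * He ^ 2) : ℝ)) /
        (Real.sqrt (1 + z ^ 2 * He ^ 2) : ℂ) := by
  set K : Kernel ℝ ℝ := ⟨fun s => gaussianReal Ex ⟨s ^ 2, sq_nonneg s⟩,
    measurable_gaussian_kernel Ex⟩ with hK
  haveI : IsMarkovKernel K := ⟨fun a =>
    (instIsProbabilityMeasureGaussianReal Ex _ : IsProbabilityMeasure (gaussianReal Ex ⟨a ^ 2, sq_nonneg a⟩))⟩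
  have hbind : cloudModel Ex En He
      = (gaussianReal En ⟨He ^ 2, sq_nonneg He⟩).bind K := rfl
  haveI : IsProbabilityMeasure (gaussianReal En ⟨He ^ 2, sq_nonneg He⟩) :=
    instIsProbabilityMeasureGaussianReal En _
  rw [charFunReal, hbind, charFun_bind]
  have hDpos : (0 : ℝ) < 1 + z ^ 2 * He ^ 2 := by positivity
  -- inner gaussian integral
  have hin : ∀ s : ℝ, ∫ x, Complex.exp (Complex.I * z * x) ∂(K s)
      = Complex.exp (Complex.I * z * Ex) *
        Complex.exp (((-(z ^ 2) / 2 : ℝ) : ℂ) * (s : ℂ) ^ 2 + 0 * (s : ℂ)) := by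
    intro s
    have hKs : K s = gaussianReal Ex ⟨s ^ 2, sq_nonneg s⟩ := rfl
    have h1 := integral_gaussianReal_cexp Ex ⟨s ^ 2, sq_nonneg s⟩ 0 (Complex.I * z)
      (by norm_num)
    simp only [Complex.ofReal_zero, zero_mul, zero_add, NNReal.coe_mk, mul_zero, sub_zero,
      Real.sqrt_one, Complex.ofReal_one, inv_one, one_mul, add_zero, mul_one] at h1
    rw [hKs, h1, ← Complex.exp_add]
    have hI : (Complex.I * (z : ℂ)) ^ 2 = -(z : ℂ) ^ 2 := by
      rw [mul_pow, Complex.I_sq]; ring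
    congr 1
    rw [hI]
    push_cast
    show (((s ^ 2 : ℝ) : ℂ) * -(z : ℂ) ^ 2 + 2 * (Ex : ℂ) * (Complex.I * z)) / 2 = _
    push_cast
    ring
  simp_rw [hin, integral_const_mul]
  rw [integral_gaussianReal_cexp En ⟨He ^ 2, sq_nonneg He⟩ (-(z ^ 2) / 2) 0
    (by show 2 * He ^ 2 * (-(z ^ 2) / 2) < 1; nlinarith [sq_nonneg (He * z)])]
  show Complex.exp (Complex.I * z * Ex) * ((Real.sqrt (1 - 2 * He ^ 2 * (-(z ^ 2) / 2)) : ℂ)⁻¹ *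
    Complex.exp ((((He ^ 2 : ℝ) : ℂ) * (0 : ℂ) ^ 2 + 2 * (En : ℂ) * 0 + 2 * ((-(z ^ 2) / 2 : ℝ) : ℂ) * (En : ℂ) ^ 2) /
      (2 * ((1 : ℂ) - 2 * ((He ^ 2 : ℝ) : ℂ) * ((-(z ^ 2) / 2 : ℝ) : ℂ))))) = _
  have hsq : 1 - 2 * He ^ 2 * (-(z ^ 2) / 2) = 1 + z ^ 2 * He ^ 2 := by ring
  rw [hsq]
  have hexp : ((He ^ 2 : ℝ) * (0 : ℂ) ^ 2 + 2 * (En : ℂ) * 0 +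
        2 * ((-(z ^ 2) / 2 : ℝ) : ℂ) * (En : ℂ) ^ 2) /
        (2 * ((1 : ℂ) - 2 * (He ^ 2 : ℝ) * ((-(z ^ 2) / 2 : ℝ) : ℂ)))
      = -(((En ^ 2 * z ^ 2 : ℝ) / (2 * (1 + z ^ 2 * He ^ 2) : ℝ) : ℝ) : ℂ) := by
    have hDC : ((2 : ℂ) * (1 + (z : ℂ) ^ 2 * (He : ℂ) ^ 2)) ≠ 0 := by
      have : (((2 * (1 + z ^ 2 * He ^ 2)) : ℝ) : ℂ) ≠ 0 := by
        exact_mod_cast (by positivity : (0:ℝ) < 2 * (1 + z ^ 2 * He ^ 2)).ne'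
      push_cast at this
      convert this using 1
    push_cast
    have h2 : ((2 : ℂ) * (1 - 2 * (He : ℂ) ^ 2 * (-(z : ℂ) ^ 2 / 2)))
        = 2 * (1 + (z : ℂ) ^ 2 * (He : ℂ) ^ 2) := by ring
    rw [h2, ← neg_div, div_eq_div_iff hDC hDC]
    ring
  rw [hexp, mul_comm ((Real.sqrt (1 + z ^ 2 * He ^ 2) : ℂ))⁻¹ _, ← mul_assoc,
    ← Complex.exp_add, div_eq_mul_inv]
  congr 2
  push_cast
  ring
end

section
/- Let Ex, En ∈ ℝ and He ≥ 0, and let μ be the cloud model CM(Ex, En, He). Then for every z ∈ ℝ, the characteristic function of μ factorizes as Φ_μ(z) = exp(i·z·Ex) · ∫ exp(−s²·z²/2) dν(s), where ν = N(En, He²). -/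
open MeasureTheory ProbabilityTheory Real
open scoped NNReal ENNReal

lemma charFun_gaussianReal_aux (m : ℝ) (v : ℝ≥0) (z : ℝ) :
    ∫ x, Complex.exp (Complex.I * z * x) ∂(gaussianReal m v) =
      Complex.exp (Complex.I * z * m) * (Real.exp (-((v : ℝ) * z ^ 2) / 2) : ℂ) := by
  by_cases hv : v = 0
  · simp [hv, integral_dirac]
  · rw [gaussianReal_of_var_ne_zero _ hv]
    have hvR : (0 : ℝ) < (v : ℝ) := lt_of_le_of_ne v.coe_nonneg (by exact_mod_cast (Ne.symm hv))
    have hvC : (v : ℂ) ≠ 0 := by exact_mod_cast hvR.ne'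
    have hmeas : Measurable fun x : ℝ => (gaussianPDFReal m v x).toNNReal :=
      (measurable_gaussianPDFReal m v).real_toNNReal
    have hdens : (gaussianPDF m v) =
        fun x => ((fun x : ℝ => (gaussianPDFReal m v x).toNNReal) x : ℝ≥0∞) := by
      funext x
      simp [gaussianPDF, ENNReal.ofReal]
    rw [hdens, integral_withDensity_eq_integral_smul hmeas]
    have heq : ∀ x : ℝ,
        ((gaussianPDFReal m v x).toNNReal) • Complex.exp (Complex.I * z * x)
          = (Real.sqrt (2 * π * v) : ℂ)⁻¹ *
            Complex.exp (-(1 / (2 * (v : ℂ))) * x ^ 2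
              + (Complex.I * z + m / v) * x + (-(m ^ 2) / (2 * v))) := by
      intro x
      have hnn : 0 ≤ gaussianPDFReal m v x := gaussianPDFReal_nonneg m v x
      rw [NNReal.smul_def, Real.coe_toNNReal _ hnn]
      rw [gaussianPDFReal]
      have : ((Real.sqrt (2 * π * ↑v))⁻¹ * Real.exp (-(x - m) ^ 2 / (2 * ↑v)) : ℝ)
            • Complex.exp (Complex.I * z * x)
          = (Real.sqrt (2 * π * v) : ℂ)⁻¹ *
            (Complex.exp ((-(x - m) ^ 2 / (2 * ↑v) : ℝ) : ℂ) * Complex.exp (Complex.I * z * x)) := by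
        rw [Complex.real_smul]
        push_cast
        ring
      rw [this, ← Complex.exp_add]
      congr 2
      push_cast
      field_simp
      try ring
    simp_rw [heq]
    rw [integral_const_mul, integral_cexp_quadratic (b := -(1 / (2 * (v : ℂ))))
      (by simp [hvR, div_pos]) _ _]
    have hpow : ((π : ℂ) / -(-(1 / (2 * (v : ℂ))))) ^ (1 / 2 : ℂ)
        = (Real.sqrt (2 * π * v) : ℂ) := by
      have h1 : (π : ℂ) / -(-(1 / (2 * (v : ℂ)))) = ((2 * π * v : ℝ) : ℂ) := by
        push_cast
        field_simp
      rw [h1, show (1/2 : ℂ) = ((1/2 : ℝ) : ℂ) by norm_num,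
        ← Complex.ofReal_cpow (by positivity), Real.sqrt_eq_rpow]
    rw [hpow]
    have hexp : (-(m:ℂ) ^ 2 / (2 * v) - (Complex.I * z + m / v) ^ 2
          / (4 * -(1 / (2 * (v : ℂ)))))
        = Complex.I * z * m + ((-((v:ℝ) * z ^ 2) / 2 : ℝ) : ℂ) := by
      have hI : Complex.I ^ 2 = -1 := Complex.I_sq
      push_cast
      field_simp
      ring_nf
      rw [hI]
      ring
    rw [hexp, Complex.exp_add]
    have hs : (Real.sqrt (2 * π * (v : ℝ)) : ℂ) ≠ 0 :=
      Complex.ofReal_ne_zero.mpr (Real.sqrt_pos.mpr (by positivity)).ne'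
    rw [Complex.ofReal_exp]
    field_simp

theorem cloudModel_charFun_factorize (Ex En He : ℝ) (hHe : 0 ≤ He) (z : ℝ) :
    charFunReal (cloudModel Ex En He) z =
      Complex.exp (Complex.I * z * Ex) *
        ((∫ s, Real.exp (-(s ^ 2 * z ^ 2) / 2)
            ∂(gaussianReal En ⟨He ^ 2, sq_nonneg He⟩) : ℝ) : ℂ) := by
  classical
  set ν : Measure ℝ := gaussianReal En ⟨He ^ 2, sq_nonneg He⟩ with hν
  -- the Markov kernel s ↦ N(Ex, s²)
  have hκmeas : Measurable fun s : ℝ => gaussianReal Ex ⟨s ^ 2, sq_nonneg s⟩ := by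
    refine Measure.measurable_of_measurable_coe _ fun t ht => ?_
    have hrw : ∀ s : ℝ, gaussianReal Ex ⟨s ^ 2, sq_nonneg s⟩ t
        = if s = 0 then Measure.dirac Ex t
          else ∫⁻ x in t, ENNReal.ofReal (gaussianPDFReal Ex ⟨s ^ 2, sq_nonneg s⟩ x) := by
      intro s
      by_cases hs : s = 0
      · simp only [hs, if_pos]
        have : (⟨(0:ℝ) ^ 2, sq_nonneg 0⟩ : ℝ≥0) = 0 := by ext; simp
        rw [show gaussianReal Ex ⟨(0:ℝ)^2, sq_nonneg 0⟩ = gaussianReal Ex (0:ℝ≥0) from congrArg _ this, gaussianReal_zero_var]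
      · rw [if_neg hs]
        have hvne : (⟨s ^ 2, sq_nonneg s⟩ : ℝ≥0) ≠ 0 := by
          intro h
          apply hs
          have := congrArg NNReal.toReal h
          exact (pow_eq_zero_iff two_ne_zero).mp this
        rw [gaussianReal_apply Ex hvne t]
        rfl
    simp_rw [hrw]
    refine Measurable.ite (measurableSet_eq) measurable_const ?_
    have hjoint : Measurable fun p : ℝ × ℝ =>
        ENNReal.ofReal (gaussianPDFReal Ex ⟨p.1 ^ 2, sq_nonneg p.1⟩ p.2) := by
      apply Measurable.ennreal_ofReal
      simp only [gaussianPDFReal, NNReal.coe_mk]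
      fun_prop
    exact hjoint.lintegral_prod_right'
  set κ : Kernel ℝ ℝ := ⟨fun s => gaussianReal Ex ⟨s ^ 2, sq_nonneg s⟩, hκmeas⟩ with hκ
  have hκap : ∀ s, κ s = gaussianReal Ex ⟨s ^ 2, sq_nonneg s⟩ := fun s => rfl
  have : IsMarkovKernel κ := ⟨fun s => by rw [hκap]; exact instIsProbabilityMeasureGaussianReal _ _⟩
  haveI : IsProbabilityMeasure ν := instIsProbabilityMeasureGaussianReal _ _
  have hbind : cloudModel Ex En He = (ν ⊗ₘ κ).snd := by
    ext t ht
    rw [cloudModel, Measure.bind_apply ht hκmeas.aemeasurable, Measure.snd_apply ht,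
      Measure.compProd_apply (measurable_snd ht)]
    rfl
  have hf_meas : AEStronglyMeasurable (fun x : ℝ => Complex.exp (Complex.I * z * x))
      ((ν ⊗ₘ κ).snd) := by
    apply Continuous.aestronglyMeasurable
    continuity
  have hnorm : ∀ p : ℝ × ℝ, ‖Complex.exp (Complex.I * z * p.2)‖ = 1 := by
    intro p
    rw [Complex.norm_exp]
    have : (Complex.I * z * p.2).re = 0 := by simp
    rw [this, Real.exp_zero]
  have hint : Integrable (fun p : ℝ × ℝ => Complex.exp (Complex.I * z * p.2)) (ν ⊗ₘ κ) := by
    refine Integrable.mono' (integrable_const 1) ?_ ?_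
    · apply Continuous.aestronglyMeasurable
      continuity
    · exact ae_of_all _ fun p => le_of_eq (hnorm p)
  rw [hbind]
  unfold charFunReal
  rw [Measure.snd, integral_map measurable_snd.aemeasurable hf_meas]
  rw [Measure.integral_compProd hint]
  simp_rw [hκap, fun s : ℝ => charFun_gaussianReal_aux Ex ⟨s ^ 2, sq_nonneg s⟩ z]
  rw [integral_const_mul]
  congr 1
  exact integral_ofReal
end

section
/- Let Ex, En ∈ ℝ and He ≥ 0, and let μ be the cloud model CM(Ex, En, He). Then for every z ∈ ℝ, the modulus of the characteristic function of μ satisfies |Φ_μ(z)| = exp(−En²·z² / (2·(1 + z²·He²))) / √(1 + z²·He²); in particular |Φ_μ(z)| ≤ 1 / √(1 + z²·He²). -/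
open MeasureTheory ProbabilityTheory Real
open scoped NNReal ENNReal

lemma gaussian_charFun_aux (m : ℝ) (v : ℝ≥0) (z : ℝ) :
    ∫ x, Complex.exp (Complex.I * z * x) ∂(gaussianReal m v) =
      Complex.exp (Complex.I * z * m - z ^ 2 * v / 2) := by
  by_cases hv : v = 0
  · subst hv
    rw [gaussianReal_zero_var, integral_dirac]
    simp
  · rw [gaussianReal_of_var_ne_zero m hv]
    have hpos : (0:ℝ) < (v:ℝ) := by
      exact_mod_cast pos_iff_ne_zero.mpr hv
    have hd : gaussianPDF m v = fun x => ((fun x => (gaussianPDFReal m v x).toNNReal) x : ℝ≥0∞) := by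
      ext x; rw [gaussianPDF, ENNReal.ofReal]
    rw [hd, integral_withDensity_eq_integral_smul
      ((measurable_gaussianPDFReal m v).real_toNNReal)]
    have hco : ∀ x : ℝ, (gaussianPDFReal m v x).toNNReal • Complex.exp (Complex.I * z * x)
        = ((Real.sqrt (2 * π * v))⁻¹ : ℂ) *
          Complex.exp ((-(2 * (v:ℝ))⁻¹ : ℝ) * (x:ℂ) ^ 2
            + ((m / v : ℝ) + Complex.I * z) * x + ((-(m ^ 2) / (2 * v) : ℝ))) := by
      intro x
      rw [NNReal.smul_def, Real.coe_toNNReal _ (gaussianPDFReal_nonneg m v x)]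
      rw [gaussianPDFReal, Complex.real_smul, Complex.ofReal_mul, Complex.ofReal_exp,
        mul_assoc, ← Complex.exp_add, Complex.ofReal_inv]
      congr 1
      have hvC : ((v:ℝ):ℂ) ≠ 0 := by exact_mod_cast hpos.ne'
      congr 1
      field_simp
      push_cast
      ring
    simp_rw [hco, integral_const_mul]
    have hb : (((-(2 * (v:ℝ))⁻¹ : ℝ)) : ℂ).re < 0 := by
      rw [Complex.ofReal_re]
      simp only [neg_neg, Left.neg_neg_iff]
      positivity
    rw [integral_cexp_quadratic hb]
    have hvC : ((v:ℝ):ℂ) ≠ 0 := by exact_mod_cast hpos.ne'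
    have h1 : ((π:ℂ) / -(((-(2 * (v:ℝ))⁻¹ : ℝ)) : ℂ)) = ((2 * π * v : ℝ) : ℂ) := by
      push_cast
      field_simp
    rw [h1]
    have h2 : ((2 * π * (v:ℝ) : ℝ) : ℂ) ^ (1/2 : ℂ) = (Real.sqrt (2*π*(v:ℝ)) : ℂ) := by
      rw [Real.sqrt_eq_rpow, Complex.ofReal_cpow (by positivity)]
      norm_num
    rw [h2]
    have h3 : ((Real.sqrt (2*π*(v:ℝ)) : ℝ) : ℂ) ≠ 0 := by
      simp only [ne_eq, Complex.ofReal_eq_zero]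
      positivity
    rw [← mul_assoc, inv_mul_cancel₀ h3, one_mul]
    congr 1
    push_cast
    field_simp
    ring_nf
    simp only [Complex.I_sq]
    ring

lemma measurable_gaussian_family (Ex : ℝ) :
    Measurable fun s : ℝ => gaussianReal Ex ⟨s ^ 2, sq_nonneg s⟩ := by
  refine Measure.measurable_of_measurable_coe _ fun S hS => ?_
  have key : (fun s : ℝ => gaussianReal Ex ⟨s ^ 2, sq_nonneg s⟩ S) =
      ({(0:ℝ)} : Set ℝ).piecewise (fun _ => Measure.dirac Ex S)
        (fun s => ∫⁻ x in S, ENNReal.ofReal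
          ((Real.sqrt (2 * π * s ^ 2))⁻¹ * rexp (-(x - Ex) ^ 2 / (2 * s ^ 2)))) := by
    ext s
    by_cases hs : s = 0
    · subst hs
      have h0 : (⟨(0:ℝ)^2, sq_nonneg 0⟩ : ℝ≥0) = (0 : ℝ≥0) := by ext; norm_num
      rw [h0, gaussianReal_zero_var, Set.piecewise_eq_of_mem _ _ _ (by simp)]
    · rw [Set.piecewise_eq_of_notMem _ _ _ (by simpa using hs)]
      have hv : (⟨s^2, sq_nonneg s⟩ : ℝ≥0) ≠ (0 : ℝ≥0) := by
        intro h
        apply hs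
        have := congrArg (NNReal.toReal) h
        change s ^ 2 = 0 at this
        simpa [pow_eq_zero_iff] using this
      rw [gaussianReal_apply Ex hv S]
      rfl
  rw [key]
  refine Measurable.piecewise (measurableSet_singleton 0) measurable_const ?_
  exact Measurable.lintegral_prod_right'
    (f := fun p : ℝ × ℝ => ENNReal.ofReal
      ((Real.sqrt (2 * π * p.1 ^ 2))⁻¹ * rexp (-(p.2 - Ex) ^ 2 / (2 * p.1 ^ 2))))
    (by
      apply ENNReal.measurable_ofReal.comp
      apply Measurable.mul
      · exact (measurable_fst.pow_const 2).const_mul (2*π) |>.sqrt.inv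
      · exact (((measurable_snd.sub_const Ex).pow_const 2).neg.div
          ((measurable_fst.pow_const 2).const_mul 2)).exp)

lemma real_exp_quadratic_integral {b : ℝ} (hb : b < 0) (c d : ℝ) :
    ∫ s : ℝ, rexp (b * s ^ 2 + c * s + d) =
      Real.sqrt (π / (-b)) * rexp (d - c ^ 2 / (4 * b)) := by
  have hbC : ((b : ℂ)).re < 0 := by simpa using hb
  have hc := integral_cexp_quadratic hbC (c : ℂ) (d : ℂ)
  have lhs : (∫ s : ℝ, Complex.exp ((b:ℂ) * s ^ 2 + (c:ℂ) * s + (d:ℂ)))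
      = ((∫ s : ℝ, rexp (b * s ^ 2 + c * s + d) : ℝ) : ℂ) := by
    simp_rw [show ∀ s : ℝ, (b:ℂ) * s ^ 2 + (c:ℂ) * s + (d:ℂ)
        = ((b * s ^ 2 + c * s + d : ℝ) : ℂ) from fun s => by push_cast; ring,
      ← Complex.ofReal_exp]
    exact integral_ofReal
  have rhs : ((π : ℂ) / -(b:ℂ)) ^ (1/2 : ℂ) * Complex.exp ((d:ℂ) - (c:ℂ)^2 / (4 * (b:ℂ)))
      = ((Real.sqrt (π / (-b)) * rexp (d - c ^ 2 / (4 * b)) : ℝ) : ℂ) := by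
    have h1 : ((π : ℂ) / -(b:ℂ)) = ((π / (-b) : ℝ) : ℂ) := by push_cast; ring
    have h2 : ((π / (-b) : ℝ) : ℂ) ^ (1/2 : ℂ) = ((Real.sqrt (π / (-b)) : ℝ) : ℂ) := by
      rw [Real.sqrt_eq_rpow, Complex.ofReal_cpow (div_nonneg pi_pos.le (by linarith))]
      norm_num
    rw [h1, h2]
    push_cast
    ring
  rw [lhs, rhs] at hc
  exact_mod_cast hc

lemma mixture_integral (En He z : ℝ) (hHe : He ≠ 0) :
    ∫ s, rexp (-(z ^ 2 * s ^ 2) / 2) ∂(gaussianReal En ⟨He ^ 2, sq_nonneg He⟩) =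
      Real.exp (-(En ^ 2 * z ^ 2) / (2 * (1 + z ^ 2 * He ^ 2))) /
        Real.sqrt (1 + z ^ 2 * He ^ 2) := by
  have hHe2 : (0:ℝ) < He ^ 2 := by positivity
  have hv : (⟨He ^ 2, sq_nonneg He⟩ : ℝ≥0) ≠ (0 : ℝ≥0) := by
    intro h
    have := congrArg NNReal.toReal h
    change He ^ 2 = 0 at this
    exact hHe2.ne' this
  set A : ℝ := 1 + z ^ 2 * He ^ 2 with hA_def
  have hA : 0 < A := by positivity
  rw [gaussianReal_of_var_ne_zero En hv]
  have hd : gaussianPDF En ⟨He ^ 2, sq_nonneg He⟩ =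
      fun x => ((fun x => (gaussianPDFReal En ⟨He ^ 2, sq_nonneg He⟩ x).toNNReal) x : ℝ≥0∞) := by
    ext x; rfl
  rw [hd, integral_withDensity_eq_integral_smul
    (f := fun x => (gaussianPDFReal En ⟨He ^ 2, sq_nonneg He⟩ x).toNNReal)
    ((measurable_gaussianPDFReal En _).real_toNNReal)]
  set b : ℝ := -(A / (2 * He ^ 2)) with hb_def
  have hb : b < 0 := by rw [hb_def]; simp only [neg_neg, Left.neg_neg_iff]; positivity
  set c : ℝ := En / He ^ 2 with hc_def
  set d : ℝ := -(En ^ 2) / (2 * He ^ 2) with hd_def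
  have key : ∀ s : ℝ, (gaussianPDFReal En ⟨He ^ 2, sq_nonneg He⟩ s).toNNReal
        • rexp (-(z ^ 2 * s ^ 2) / 2)
      = (Real.sqrt (2 * π * He ^ 2))⁻¹ * rexp (b * s ^ 2 + c * s + d) := by
    intro s
    rw [NNReal.smul_def, Real.coe_toNNReal _ (gaussianPDFReal_nonneg En ⟨He ^ 2, sq_nonneg He⟩ s)]
    unfold gaussianPDFReal
    dsimp only [NNReal.toReal]
    rw [smul_eq_mul, mul_assoc, ← Real.exp_add]
    congr 2
    rw [hb_def, hc_def, hd_def, hA_def]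
    field_simp
    ring
  simp_rw [key, integral_const_mul, real_exp_quadratic_integral hb c d]
  have h1 : π / (-b) = (2 * π * He ^ 2) / A := by
    rw [hb_def]
    field_simp
  have hA' : (1:ℝ) + z ^ 2 * He ^ 2 ≠ 0 := by positivity
  have h2 : d - c ^ 2 / (4 * b) = -(En ^ 2 * z ^ 2) / (2 * A) := by
    have h4 : (-(He ^ 4 * 4) - He ^ 6 * z ^ 2 * 4) ≠ 0 := by
      have h5 : (0:ℝ) < He ^ 4 * 4 + He ^ 6 * z ^ 2 * 4 := by positivity
      intro h6
      nlinarith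
    rw [hb_def, hc_def, hd_def, hA_def]
    field_simp [hA']
    ring
  rw [h1, h2, Real.sqrt_div (by positivity : (0:ℝ) ≤ 2 * π * He ^ 2) A]
  have hs : Real.sqrt (2 * π * He ^ 2) ≠ 0 := by positivity
  have hsA : Real.sqrt A ≠ 0 := by positivity
  field_simp

theorem cloudModel_charFun_abs (Ex En He : ℝ) (hHe : 0 ≤ He) (z : ℝ) :
    ‖charFunReal (cloudModel Ex En He) z‖ =
        Real.exp (-(En ^ 2 * z ^ 2) / (2 * (1 + z ^ 2 * He ^ 2))) /
          Real.sqrt (1 + z ^ 2 * He ^ 2) ∧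
      ‖charFunReal (cloudModel Ex En He) z‖ ≤
        1 / Real.sqrt (1 + z ^ 2 * He ^ 2) := by
  have hg : Measurable fun s : ℝ => gaussianReal Ex ⟨s ^ 2, sq_nonneg s⟩ :=
    measurable_gaussian_family Ex
  set ν : Measure ℝ := gaussianReal En ⟨He ^ 2, sq_nonneg He⟩ with hν
  set κ : Kernel ℝ ℝ := ⟨fun s => gaussianReal Ex ⟨s ^ 2, sq_nonneg s⟩, hg⟩ with hκ
  have hκa : ∀ s, κ s = gaussianReal Ex ⟨s ^ 2, sq_nonneg s⟩ := fun s => rfl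
  haveI : IsMarkovKernel κ := ⟨fun s => by rw [hκa]; exact instIsProbabilityMeasureGaussianReal _ _⟩
  haveI : IsProbabilityMeasure ν := by rw [hν]; exact instIsProbabilityMeasureGaussianReal _ _
  have hbind : cloudModel Ex En He = (ν ⊗ₘ κ).map Prod.snd := by
    rw [cloudModel]
    ext S hS
    rw [Measure.bind_apply hS hg.aemeasurable, Measure.map_apply measurable_snd hS,
      Measure.compProd_apply (measurable_snd hS)]
    rfl
  have hcont : Continuous fun x : ℝ => Complex.exp (Complex.I * z * x) :=
    Complex.continuous_exp.comp (by continuity)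
  have hnorm : ∀ x : ℝ, ‖Complex.exp (Complex.I * z * x)‖ = 1 := by
    intro x
    rw [Complex.norm_exp]
    simp [Complex.mul_re, Complex.mul_im]
  have hint : Integrable (fun p : ℝ × ℝ => Complex.exp (Complex.I * z * p.2)) (ν ⊗ₘ κ) := by
    refine Integrable.mono' (integrable_const 1)
      ((hcont.comp continuous_snd).aestronglyMeasurable) ?_
    filter_upwards with p
    rw [hnorm]
  have hΦ : charFunReal (cloudModel Ex En He) z
      = Complex.exp (Complex.I * z * Ex)
        * ((∫ s, rexp (-(z ^ 2 * s ^ 2) / 2) ∂ν : ℝ) : ℂ) := by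
    rw [charFunReal, hbind,
      integral_map measurable_snd.aemeasurable hcont.aestronglyMeasurable,
      Measure.integral_compProd hint]
    have inner : ∀ s : ℝ, (∫ x, Complex.exp (Complex.I * z * x) ∂(κ s))
        = Complex.exp (Complex.I * z * Ex) * ((rexp (-(z ^ 2 * s ^ 2) / 2) : ℝ) : ℂ) := by
      intro s
      rw [hκa, gaussian_charFun_aux Ex ⟨s ^ 2, sq_nonneg s⟩ z, Complex.ofReal_exp, ← Complex.exp_add]
      congr 1
      dsimp only [NNReal.toReal]
      push_cast
      ring
    simp_rw [inner, integral_const_mul]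
    congr 1
    exact integral_ofReal
  set R : ℝ := ∫ s, rexp (-(z ^ 2 * s ^ 2) / 2) ∂ν with hR
  have hRnonneg : 0 ≤ R := integral_nonneg fun s => (Real.exp_pos _).le
  have habs : ‖charFunReal (cloudModel Ex En He) z‖ = R := by
    rw [hΦ, norm_mul, Complex.norm_of_nonneg hRnonneg]
    rw [show ‖Complex.exp (Complex.I * z * Ex)‖ = 1 from by
      exact hnorm Ex]
    ring
  have hReq : R = Real.exp (-(En ^ 2 * z ^ 2) / (2 * (1 + z ^ 2 * He ^ 2))) /
      Real.sqrt (1 + z ^ 2 * He ^ 2) := by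
    by_cases hHe0 : He = 0
    · subst hHe0
      rw [hR, hν]
      have h0 : (⟨(0:ℝ)^2, sq_nonneg 0⟩ : ℝ≥0) = (0 : ℝ≥0) := by ext; norm_num
      rw [h0, gaussianReal_zero_var, integral_dirac]
      norm_num
      ring_nf
    · rw [hR, hν]
      exact mixture_integral En He z hHe0
  have hA : (0:ℝ) < 1 + z ^ 2 * He ^ 2 := by positivity
  refine ⟨by rw [habs, hReq], ?_⟩
  rw [habs, hReq]
  gcongr
  rw [Real.exp_le_one_iff]
  have h0 : (0:ℝ) ≤ En ^ 2 * z ^ 2 := by positivity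
  apply div_nonpos_of_nonpos_of_nonneg
  · linarith
  · positivity
end

section
/- Let En ∈ ℝ and He ≥ 0, and let μ be the cloud model CM(0, En, He) with expectation Ex = 0. Then its characteristic function is real-valued and strictly positive: for every z ∈ ℝ, Φ_μ(z) = exp(−En²·z² / (2·(1 + z²·He²))) / √(1 + z²·He²) ∈ (0, 1]. -/
open MeasureTheory ProbabilityTheory Real
open scoped NNReal ENNReal

lemma aux_integral_gaussianReal (m : ℝ) {v : ℝ≥0} (hv : v ≠ 0) (g : ℝ → ℂ) :
    ∫ x, g x ∂(gaussianReal m v) = ∫ x, (gaussianPDFReal m v x : ℂ) * g x := by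
  rw [gaussianReal_of_var_ne_zero m hv]
  have h : gaussianPDF m v = fun x => ((Real.toNNReal (gaussianPDFReal m v x) : ℝ≥0) : ℝ≥0∞) := rfl
  rw [h, integral_withDensity_eq_integral_smul
    ((measurable_gaussianPDFReal m v).real_toNNReal) g]
  congr 1; ext x
  rw [NNReal.smul_def, Real.coe_toNNReal _ (gaussianPDFReal_nonneg m v x),
    Complex.real_smul]

lemma aux_cpow_half {r : ℝ} (hr : 0 ≤ r) : ((r : ℂ)) ^ (1/2 : ℂ) = ((Real.sqrt r : ℝ) : ℂ) := by
  rw [Real.sqrt_eq_rpow]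
  rw [show (1/2 : ℂ) = ((1/2 : ℝ) : ℂ) by norm_num]
  rw [← Complex.ofReal_cpow hr]

lemma aux_charFun_gaussian (s z : ℝ) :
    ∫ x, Complex.exp (Complex.I * z * x) ∂(gaussianReal 0 ⟨s ^ 2, sq_nonneg s⟩) =
      ((Real.exp (-(z ^ 2 / 2) * s ^ 2) : ℝ) : ℂ) := by
  by_cases hs : s = 0
  · subst hs
    have h0 : @Eq ℝ≥0 ⟨(0:ℝ) ^ 2, sq_nonneg 0⟩ 0 := NNReal.eq (by show (0:ℝ) ^ 2 = ((0:ℝ≥0):ℝ); simp)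
    rw [h0, gaussianReal_zero_var, integral_dirac]
    simp
  · set v : ℝ≥0 := ⟨s ^ 2, sq_nonneg s⟩ with hv
    have hvne : v ≠ 0 := by
      intro h
      apply hs
      have := congrArg (NNReal.toReal) h
      exact pow_eq_zero_iff two_ne_zero |>.mp (show s ^ 2 = 0 from this.trans NNReal.coe_zero)
    have hvpos : (0:ℝ) < (v:ℝ) := by
      have : (v:ℝ) = s ^ 2 := rfl
      rw [this]; positivity
    rw [aux_integral_gaussianReal 0 hvne]
    have hint : ∀ x : ℝ, (gaussianPDFReal 0 v x : ℂ) * Complex.exp (Complex.I * z * x)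
        = ((Real.sqrt (2 * π * v))⁻¹ : ℝ) *
          Complex.exp ((-(1/(2*(v:ℝ))) : ℂ) * x ^ 2 + (Complex.I * z) * x + 0) := by
      intro x
      have hvC : ((v:ℝ):ℂ) ≠ 0 := by
        exact_mod_cast ne_of_gt hvpos
      rw [gaussianPDFReal]
      push_cast
      rw [mul_assoc, ← Complex.exp_add]
      congr 2
      field_simp
      ring
    simp_rw [hint]
    rw [integral_const_mul, integral_cexp_quadratic (by
      simp only [Complex.neg_re, Complex.ofReal_re]
      norm_num
      positivity) _ _]
    have hvC : ((v:ℝ):ℂ) ≠ 0 := by exact_mod_cast ne_of_gt hvpos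
    have h1 : ((π:ℂ) / -(-(1/(2*((v:ℝ):ℂ))))) = ((2*π*(v:ℝ) : ℝ) : ℂ) := by
      push_cast
      field_simp
    rw [h1, aux_cpow_half (by positivity)]
    have h2 : (0 : ℂ) - (Complex.I * z)^2/(4 * (-(1/(2*((v:ℝ):ℂ))))) =
        ((-(z ^ 2 / 2) * s ^ 2 : ℝ) : ℂ) := by
      have hvs : ((v:ℝ):ℂ) = (s:ℂ) ^ 2 := by
        have : (v:ℝ) = s ^ 2 := rfl
        rw [this]; push_cast; ring
      rw [hvs]
      have hsC : (s:ℂ) ≠ 0 := by exact_mod_cast hs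
      push_cast
      field_simp
      ring_nf
      rw [Complex.I_sq]
      ring
    rw [h2, ← Complex.ofReal_exp, ← Complex.ofReal_mul, ← Complex.ofReal_mul,
      Complex.ofReal_inj, ← mul_assoc,
      inv_mul_cancel₀ (ne_of_gt (Real.sqrt_pos.mpr (by positivity))), one_mul]

lemma aux_outer (En He : ℝ) (c : ℝ) (hc : 0 ≤ c) :
    ∫ s, ((Real.exp (-c * s ^ 2) : ℝ) : ℂ) ∂(gaussianReal En ⟨He ^ 2, sq_nonneg He⟩) =
      ((Real.exp (-(En ^ 2 * c) / (1 + 2 * c * He ^ 2)) /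
        Real.sqrt (1 + 2 * c * He ^ 2) : ℝ) : ℂ) := by
  by_cases hHe : He = 0
  · subst hHe
    have h0 : @Eq ℝ≥0 ⟨(0:ℝ) ^ 2, sq_nonneg 0⟩ 0 := NNReal.eq (by show (0:ℝ) ^ 2 = ((0:ℝ≥0):ℝ); simp)
    rw [h0, gaussianReal_zero_var, integral_dirac]
    norm_num
    ring_nf
  · set v : ℝ≥0 := ⟨He ^ 2, sq_nonneg He⟩ with hv
    have hvR : (v:ℝ) = He ^ 2 := rfl
    have hvpos : (0:ℝ) < (v:ℝ) := by rw [hvR]; positivity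
    have hvne : v ≠ 0 := by
      intro h
      rw [h] at hvR
      exact hHe (by simpa [pow_eq_zero_iff] using hvR.symm)
    have hvC : ((v:ℝ):ℂ) ≠ 0 := by exact_mod_cast ne_of_gt hvpos
    have hD : (0:ℝ) < 1 + 2 * c * (v:ℝ) := by positivity
    have hDC : ((1 + 2 * c * (v:ℝ) : ℝ) : ℂ) ≠ 0 := by exact_mod_cast ne_of_gt hD
    rw [aux_integral_gaussianReal En hvne]
    have hint : ∀ s : ℝ, (gaussianPDFReal En v s : ℂ) * ((Real.exp (-c * s ^ 2) : ℝ) : ℂ)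
        = ((Real.sqrt (2 * π * v))⁻¹ : ℝ) *
          Complex.exp ((-(c + 1/(2*((v:ℝ):ℂ)))) * s ^ 2 + (En/((v:ℝ):ℂ)) * s
            + (-(En:ℂ)^2/(2*((v:ℝ):ℂ)))) := by
      intro s
      rw [gaussianPDFReal]
      push_cast
      rw [mul_assoc, ← Complex.exp_add]
      congr 2
      field_simp
      ring
    simp_rw [hint]
    rw [integral_const_mul, integral_cexp_quadratic (by
      simp only [Complex.neg_re, Complex.add_re, Complex.ofReal_re]
      have : (1/(2*((v:ℝ):ℂ))).re = 1/(2*(v:ℝ)) := by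
        rw [show (2*((v:ℝ):ℂ)) = ((2*(v:ℝ) : ℝ) : ℂ) by push_cast; ring]
        rw [show (1 : ℂ)/((2*(v:ℝ) : ℝ) : ℂ) = (((1/(2*(v:ℝ)) : ℝ)) : ℂ) by push_cast; ring]
        simp
      rw [this]
      have : 0 < c + 1/(2*(v:ℝ)) := by positivity
      linarith) _ _]
    have h1 : ((π:ℂ) / -(-((c:ℂ) + 1/(2*((v:ℝ):ℂ))))) =
        ((2*π*(v:ℝ)/(1 + 2*c*(v:ℝ)) : ℝ) : ℂ) := by
      push_cast
      field_simp
      ring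
    rw [h1, aux_cpow_half (by positivity)]
    have hDC' : (1:ℂ) + 2*(c:ℂ)*((v:ℝ):ℂ) ≠ 0 := by
      intro h
      apply hDC
      rw [show ((1 + 2 * c * (v:ℝ) : ℝ) : ℂ) = (1:ℂ) + 2*(c:ℂ)*((v:ℝ):ℂ) by push_cast; ring, h]
    have hQ : -((c:ℂ) + 1/(2*((v:ℝ):ℂ))) =
        -(((1:ℂ) + 2*(c:ℂ)*((v:ℝ):ℂ))/(2*((v:ℝ):ℂ))) := by
      field_simp
      ring
    have h2 : (-(En:ℂ)^2/(2*((v:ℝ):ℂ))) - ((En:ℂ)/((v:ℝ):ℂ))^2/(4 * (-((c:ℂ) + 1/(2*((v:ℝ):ℂ))))) =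
        ((-(En ^ 2 * c) / (1 + 2 * c * (v:ℝ)) : ℝ) : ℂ) := by
      rw [hQ]
      push_cast
      rw [mul_neg, div_neg, mul_div_assoc', div_div_eq_mul_div]
      have hDC'' : (1:ℂ) + ((v:ℝ):ℂ) * c * 2 ≠ 0 := by
        rw [show (1:ℂ) + ((v:ℝ):ℂ) * c * 2 = 1 + 2*c*((v:ℝ):ℂ) by ring]; exact hDC'
      field_simp
      ring_nf
      linear_combination (4 * (En:ℂ) ^ 2) * mul_inv_cancel₀ hDC''
    rw [h2, ← Complex.ofReal_exp, ← Complex.ofReal_mul, ← Complex.ofReal_mul,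
      Complex.ofReal_inj]
    rw [hvR]
    rw [Real.sqrt_div (by positivity : (0:ℝ) ≤ 2 * π * He ^ 2)]
    have hA : Real.sqrt (2 * π * He ^ 2) ≠ 0 := ne_of_gt (Real.sqrt_pos.mpr (by positivity))
    have hDs : Real.sqrt (1 + 2 * c * He ^ 2) ≠ 0 := ne_of_gt (Real.sqrt_pos.mpr (by positivity))
    field_simp

lemma aux_measurable_family (m : ℝ) :
    Measurable (fun s : ℝ => gaussianReal m ⟨s ^ 2, sq_nonneg s⟩) := by
  rw [Measure.measurable_measure]
  intro A hA
  have h : (fun s : ℝ => gaussianReal m ⟨s ^ 2, sq_nonneg s⟩ A) =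
      Set.piecewise ({0} : Set ℝ) (fun _ => Measure.dirac m A)
        (fun s => ∫⁻ x, gaussianPDF m ⟨s ^ 2, sq_nonneg s⟩ x ∂(volume.restrict A)) := by
    ext s
    by_cases hs : s = 0
    · subst hs
      have h0 : @Eq ℝ≥0 ⟨(0:ℝ) ^ 2, sq_nonneg 0⟩ 0 := NNReal.eq (by show (0:ℝ) ^ 2 = ((0:ℝ≥0):ℝ); simp)
      rw [Set.piecewise_eq_of_mem _ _ _ (Set.mem_singleton 0), h0, gaussianReal_zero_var]
    · have hv : (⟨s ^ 2, sq_nonneg s⟩ : ℝ≥0) ≠ 0 := by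
        intro h
        exact hs (pow_eq_zero_iff two_ne_zero |>.mp (show s ^ 2 = 0 from (congrArg NNReal.toReal h).trans NNReal.coe_zero))
      rw [Set.piecewise_eq_of_notMem _ _ _ (by simpa using hs),
        gaussianReal_of_var_ne_zero m hv, withDensity_apply _ hA]
  rw [h]
  refine Measurable.piecewise (measurableSet_singleton 0) measurable_const ?_
  have : Measurable (Function.uncurry fun (s : ℝ) (x : ℝ) =>
      gaussianPDF m ⟨s ^ 2, sq_nonneg s⟩ x) := by
    apply Measurable.ennreal_ofReal
    unfold gaussianPDFReal
    fun_prop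
  exact this.lintegral_prod_right'

lemma aux_integral_bind {m : Measure ℝ} [IsProbabilityMeasure m]
    {k : ℝ → Measure ℝ} (hk : Measurable k) (hk' : ∀ s, IsProbabilityMeasure (k s))
    {f : ℝ → ℂ} (hf : Measurable f) (hC : ∀ x, ‖f x‖ ≤ 1) :
    ∫ x, f x ∂(m.bind k) = ∫ s, ∫ x, f x ∂(k s) ∂m := by
  let κ : Kernel ℝ ℝ := ⟨k, hk⟩
  have hκ : IsMarkovKernel κ := ⟨hk'⟩
  have hbind : m.bind k = (m.compProd κ).map Prod.snd := by
    ext A hA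
    rw [Measure.bind_apply hA hk.aemeasurable, Measure.map_apply measurable_snd hA,
      Measure.compProd_apply (measurable_snd hA)]
    rfl
  rw [hbind, integral_map measurable_snd.aemeasurable hf.aestronglyMeasurable]
  have hint : Integrable (fun p : ℝ × ℝ => f p.2) (m.compProd κ) := by
    refine (integrable_const (1:ℝ)).mono' ((hf.comp measurable_snd).aestronglyMeasurable) ?_
    exact Filter.Eventually.of_forall fun p => hC p.2
  rw [MeasureTheory.Measure.integral_compProd hint]
  rfl

/-- For `Ex = 0`, the characteristic function of the cloud model is real-valued and
takes values in `(0, 1]`. -/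
theorem cloudModel_charFun_center_zero (En He : ℝ) (hHe : 0 ≤ He) (z : ℝ) :
    charFunReal (cloudModel 0 En He) z =
        ((Real.exp (-(En ^ 2 * z ^ 2) / (2 * (1 + z ^ 2 * He ^ 2))) /
          Real.sqrt (1 + z ^ 2 * He ^ 2) : ℝ) : ℂ) ∧
      Real.exp (-(En ^ 2 * z ^ 2) / (2 * (1 + z ^ 2 * He ^ 2))) /
          Real.sqrt (1 + z ^ 2 * He ^ 2) ∈ Set.Ioc (0 : ℝ) 1 := by
  have hDpos : (0:ℝ) < 1 + z ^ 2 * He ^ 2 := by positivity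
  constructor
  · rw [charFunReal, cloudModel]
    have hf : Measurable fun x : ℝ => Complex.exp (Complex.I * z * x) :=
      Complex.measurable_exp.comp (measurable_const.mul Complex.measurable_ofReal)
    have hC : ∀ x : ℝ, ‖Complex.exp (Complex.I * z * x)‖ ≤ 1 := by
      intro x
      rw [Complex.norm_exp]
      have : (Complex.I * z * x).re = 0 := by simp
      rw [this, Real.exp_zero]
    haveI := instIsProbabilityMeasureGaussianReal En ⟨He ^ 2, sq_nonneg He⟩
    rw [aux_integral_bind (aux_measurable_family 0) (fun s => instIsProbabilityMeasureGaussianReal 0 _) hf hC]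
    simp_rw [aux_charFun_gaussian]
    rw [aux_outer En He (z ^ 2 / 2) (by positivity)]
    have e1 : 1 + 2 * (z ^ 2 / 2) * He ^ 2 = 1 + z ^ 2 * He ^ 2 := by ring
    have e2 : -(En ^ 2 * (z ^ 2 / 2)) / (1 + z ^ 2 * He ^ 2) =
        -(En ^ 2 * z ^ 2) / (2 * (1 + z ^ 2 * He ^ 2)) := by
      rw [div_eq_div_iff (by positivity) (by positivity)]
      ring
    rw [e1, e2]
  · constructor
    · positivity
    · rw [div_le_one (Real.sqrt_pos.mpr hDpos)]
      calc Real.exp (-(En ^ 2 * z ^ 2) / (2 * (1 + z ^ 2 * He ^ 2))) ≤ 1 := by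
            apply Real.exp_le_one_iff.mpr
            apply div_nonpos_of_nonpos_of_nonneg
            · simp [mul_nonneg (sq_nonneg En) (sq_nonneg z)]
            · positivity
        _ ≤ Real.sqrt (1 + z ^ 2 * He ^ 2) := by
            exact Real.one_le_sqrt.mpr (by nlinarith [sq_nonneg (z*He)])
end

section
/- Let Ex, En ∈ ℝ and He > 0, and let μ be the cloud model CM(Ex, En, He). Then μ is absolutely continuous with respect to Lebesgue measure on ℝ, with density f(x) = ∫_{ℝ} (1/√(2π·s²))·exp(−(x − Ex)²/(2·s²)) · (1/√(2π·He²))·exp(−(s − En)²/(2·He²)) ds for (Lebesgue-almost every) x ∈ ℝ, where the inner Gaussian density at s = 0 is interpreted as 0 (the set {s = 0} being ν-null). -/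
open MeasureTheory ProbabilityTheory Real
open scoped NNReal ENNReal

section aux
variable (Ex En He : ℝ)

noncomputable def cmP (x s : ℝ) : ℝ :=
  gaussianPDFReal Ex ⟨s ^ 2, sq_nonneg s⟩ x * gaussianPDFReal En ⟨He ^ 2, sq_nonneg He⟩ s

noncomputable def cmF (x : ℝ) : ℝ≥0∞ :=
  ∫⁻ s, ENNReal.ofReal (cmP Ex En He x s)

lemma cmP_nonneg (x s : ℝ) : 0 ≤ cmP Ex En He x s :=
  mul_nonneg (gaussianPDFReal_nonneg _ _ _) (gaussianPDFReal_nonneg _ _ _)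

lemma cmP_meas : Measurable (Function.uncurry fun x s => cmP Ex En He x s) := by
  unfold cmP gaussianPDFReal
  fun_prop

lemma cmF_meas : Measurable (cmF Ex En He) :=
  Measurable.lintegral_prod_right (cmP_meas Ex En He).ennreal_ofReal

lemma cloudModel_eq (hHe : He ≠ 0) :
    cloudModel Ex En He = volume.withDensity (cmF Ex En He) := by
  have hv : (⟨He ^ 2, sq_nonneg He⟩ : ℝ≥0) ≠ 0 := by
    simp [← NNReal.coe_ne_zero, pow_ne_zero _ hHe]
  set ν := gaussianReal En ⟨He ^ 2, sq_nonneg He⟩ with hν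
  set κ' : ℝ → Measure ℝ :=
    fun s => volume.withDensity (gaussianPDF Ex ⟨s ^ 2, sq_nonneg s⟩) with hκ'
  have hjm : Measurable (Function.uncurry fun s x =>
      gaussianPDF Ex ⟨s ^ 2, sq_nonneg s⟩ x) := by
    unfold gaussianPDF gaussianPDFReal
    fun_prop
  have hκ'meas : Measurable κ' := by
    apply Measure.measurable_of_measurable_coe
    intro A hA
    simp only [hκ', withDensity_apply _ hA]
    simp only [← lintegral_indicator hA]
    exact Measurable.lintegral_prod_right
      (f := fun s x => A.indicator (gaussianPDF Ex ⟨s ^ 2, sq_nonneg s⟩) x)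
      (hjm.indicator (measurable_snd hA))
  -- ν-a.e. s ≠ 0
  have hae0 : ∀ᵐ s ∂ν, s ≠ 0 := by
    have : ν {0} = 0 :=
      gaussianReal_absolutelyContinuous En hv (measure_singleton 0)
    rw [ae_iff]
    simpa using this
  have haeeq : (fun s => gaussianReal Ex ⟨s ^ 2, sq_nonneg s⟩) =ᵐ[ν] κ' := by
    filter_upwards [hae0] with s hs
    exact gaussianReal_of_var_ne_zero Ex (by
      have h : (⟨s ^ 2, sq_nonneg s⟩ : ℝ≥0) ≠ 0 := by simp [← NNReal.coe_ne_zero, pow_ne_zero _ hs]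
      exact h)
  have hbind : cloudModel Ex En He = ν.bind κ' := by
    unfold cloudModel Measure.bind
    rw [Measure.map_congr haeeq]
  rw [hbind]
  ext A hA
  rw [Measure.bind_apply hA hκ'meas.aemeasurable, withDensity_apply _ hA]
  have hκ'A : ∀ s, κ' s A = ∫⁻ x in A, gaussianPDF Ex ⟨s ^ 2, sq_nonneg s⟩ x := fun s =>
    withDensity_apply _ hA
  simp only [hκ'A]
  rw [hν, gaussianReal_of_var_ne_zero En hv]
  erw [lintegral_withDensity_eq_lintegral_mul _ (measurable_gaussianPDF _ _)]
  swap
  · simp only [← lintegral_indicator hA]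
    exact Measurable.lintegral_prod_right
      (f := fun s x => A.indicator (gaussianPDF Ex ⟨s ^ 2, sq_nonneg s⟩) x)
      (hjm.indicator (measurable_snd hA))
  have hswap : ∫⁻ s, (gaussianPDF En ⟨He ^ 2, sq_nonneg He⟩ * fun s =>
        ∫⁻ x in A, gaussianPDF Ex ⟨s ^ 2, sq_nonneg s⟩ x) s
      = ∫⁻ s, ∫⁻ x in A,
        gaussianPDF En ⟨He ^ 2, sq_nonneg He⟩ s * gaussianPDF Ex ⟨s ^ 2, sq_nonneg s⟩ x := by
    refine lintegral_congr fun s => ?_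
    simp only [Pi.mul_apply]
    exact (lintegral_const_mul _ (measurable_gaussianPDF _ _)).symm
  rw [hswap, lintegral_lintegral_swap]
  · refine setLIntegral_congr_fun hA (fun x _ => ?_)
    unfold cmF
    refine lintegral_congr fun s => ?_
    unfold gaussianPDF cmP
    exact (ENNReal.ofReal_mul (gaussianPDFReal_nonneg _ _ _)).symm.trans (by rw [mul_comm])
  · exact ((measurable_gaussianPDF _ _).comp measurable_fst).mul hjm |>.aemeasurable

lemma cloudModel_univ (hHe : He ≠ 0) : cloudModel Ex En He Set.univ = 1 := by
  have hv : (⟨He ^ 2, sq_nonneg He⟩ : ℝ≥0) ≠ 0 := by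
    simp [← NNReal.coe_ne_zero, pow_ne_zero _ hHe]
  rw [cloudModel_eq Ex En He hHe, withDensity_apply _ MeasurableSet.univ, setLIntegral_univ]
  unfold cmF
  rw [lintegral_lintegral_swap ((cmP_meas Ex En He).ennreal_ofReal.aemeasurable)]
  have hae0 : ∀ᵐ s : ℝ ∂volume, s ≠ 0 := by
    rw [ae_iff]
    simpa using measure_singleton (0 : ℝ)
  have h1 : ∫⁻ s : ℝ, ∫⁻ x : ℝ, ENNReal.ofReal (cmP Ex En He x s)
      = ∫⁻ s : ℝ, ENNReal.ofReal (gaussianPDFReal En ⟨He ^ 2, sq_nonneg He⟩ s) := by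
    refine lintegral_congr_ae ?_
    filter_upwards [hae0] with s hs
    have hsv : (⟨s ^ 2, sq_nonneg s⟩ : ℝ≥0) ≠ 0 := by
      simp [← NNReal.coe_ne_zero, pow_ne_zero _ hs]
    calc ∫⁻ x : ℝ, ENNReal.ofReal (cmP Ex En He x s)
        = ∫⁻ x : ℝ, ENNReal.ofReal (gaussianPDFReal Ex ⟨s ^ 2, sq_nonneg s⟩ x) *
            ENNReal.ofReal (gaussianPDFReal En ⟨He ^ 2, sq_nonneg He⟩ s) := by
          refine lintegral_congr fun x => ?_
          rw [cmP]; exact ENNReal.ofReal_mul (gaussianPDFReal_nonneg _ _ _)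
      _ = _ := by
          have h := lintegral_mul_const (μ := volume)
            (ENNReal.ofReal (gaussianPDFReal En ⟨He ^ 2, sq_nonneg He⟩ s))
            (measurable_gaussianPDFReal Ex (⟨s ^ 2, sq_nonneg s⟩ : ℝ≥0)).ennreal_ofReal
          rw [lintegral_gaussianPDFReal_eq_one Ex hsv, one_mul] at h
          exact h
  rw [h1, lintegral_gaussianPDFReal_eq_one En hv]
end aux

/-- For `He > 0` the cloud model is absolutely continuous w.r.t. Lebesgue measure, with density
`f(x) = ∫ (2π s²)^(-1/2) exp(−(x−Ex)²/(2s²)) ⬝ (2π He²)^(-1/2) exp(−(s−En)²/(2He²)) ds`.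
(In Lean, `(√(2π·0²))⁻¹ = 0`, so the inner Gaussian density at `s = 0` is interpreted as `0`.) -/
theorem cloudModel_absolutelyContinuous (Ex En He : ℝ) (hHe : 0 < He) :
    cloudModel Ex En He ≪ (volume : Measure ℝ) ∧
      ∀ᵐ x ∂(volume : Measure ℝ),
        (cloudModel Ex En He).rnDeriv volume x =
          ENNReal.ofReal (∫ s : ℝ,
            (Real.sqrt (2 * π * s ^ 2))⁻¹ * Real.exp (-(x - Ex) ^ 2 / (2 * s ^ 2)) *
              ((Real.sqrt (2 * π * He ^ 2))⁻¹ * Real.exp (-(s - En) ^ 2 / (2 * He ^ 2)))) := by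
  have heq := cloudModel_eq Ex En He hHe.ne'
  constructor
  · rw [heq]; exact withDensity_absolutelyContinuous _ _
  have hrn : (cloudModel Ex En He).rnDeriv volume =ᵐ[volume] cmF Ex En He := by
    rw [heq]; exact Measure.rnDeriv_withDensity _ (cmF_meas Ex En He)
  have htot : ∫⁻ x, cmF Ex En He x ≠ ⊤ := by
    have : ∫⁻ x, cmF Ex En He x = cloudModel Ex En He Set.univ := by
      rw [heq, withDensity_apply _ MeasurableSet.univ, setLIntegral_univ]
    rw [this, cloudModel_univ Ex En He hHe.ne']
    exact ENNReal.one_ne_top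
  have hlt := ae_lt_top (cmF_meas Ex En He) htot
  filter_upwards [hrn, hlt] with x hx hxlt
  rw [hx]
  have hint : ∫ s, (Real.sqrt (2 * π * s ^ 2))⁻¹ * Real.exp (-(x - Ex) ^ 2 / (2 * s ^ 2)) *
        ((Real.sqrt (2 * π * He ^ 2))⁻¹ * Real.exp (-(s - En) ^ 2 / (2 * He ^ 2)))
      = ∫ s, cmP Ex En He x s := by
    refine integral_congr_ae (ae_of_all _ fun s => ?_)
    simp [cmP, gaussianPDFReal]
    rfl
  rw [hint, integral_eq_lintegral_of_nonneg_ae (ae_of_all _ (cmP_nonneg Ex En He x))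
    ((cmP_meas Ex En He).comp measurable_prodMk_left).aestronglyMeasurable]
  exact (ENNReal.ofReal_toReal hxlt.ne).symm
end
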